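/- Let $c_0(L) = h(L) + \frac{1}{2}\sin(2 h(L))$ with $h(L) = \arccos(\tanh(L/2))$. Then $c_0(L) = \frac{\pi}{2} - \frac{L^3}{12} + O(L^5)$ as $L \to 0^+$; that is, there exist constants $\delta > 0$ and $M > 0$ such that for all $0 < L < \delta$, $\left| c_0(L) - \frac{\pi}{2} + \frac{L^3}{12} \right| \leq M L^5$. -/

import Mathlib

open Real

/-- Half the angular width of the standard collar of a geodesic of length `L`. -/
noncomputable def hh (L : ℝ) : ℝ := Real.arccos (Real.tanh (L / 2))

/-- `c₀(L) = h(L) + sin(2h(L))/2`. -/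
noncomputable def c₀ (L : ℝ) : ℝ := hh L + Real.sin (2 * hh L) / 2

lemma exp_taylor2 {x : ℝ} (hx : |x| ≤ 1) :
    |Real.exp x - (1 + x + x^2/2)| ≤ |x|^3 * (2/9) := by
  have h := Real.exp_bound hx (n := 3) (by norm_num)
  simp [Finset.sum_range_succ, Nat.factorial] at h
  convert h using 2
  norm_num

lemma sinh_taylor {x : ℝ} (h0 : 0 ≤ x) (h1 : x ≤ 1) :
    |Real.sinh x - x| ≤ 2/9 * x^3 := by
  have hx : |x| ≤ 1 := by rwa [abs_of_nonneg h0]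
  have hx' : |(-x)| ≤ 1 := by rwa [abs_neg]
  have A := exp_taylor2 hx
  have B := exp_taylor2 hx'
  rw [abs_of_nonneg h0] at A
  rw [abs_neg, abs_of_nonneg h0] at B
  rw [Real.sinh_eq]
  rw [abs_le] at A B ⊢
  constructor <;> nlinarith [A.1, A.2, B.1, B.2]

lemma cosh_taylor {x : ℝ} (h0 : 0 ≤ x) (h1 : x ≤ 1) :
    |Real.cosh x - (1 + x^2/2)| ≤ 2/9 * x^3 := by
  have hx : |x| ≤ 1 := by rwa [abs_of_nonneg h0]
  have hx' : |(-x)| ≤ 1 := by rwa [abs_neg]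
  have A := exp_taylor2 hx
  have B := exp_taylor2 hx'
  rw [abs_of_nonneg h0] at A
  rw [abs_neg, abs_of_nonneg h0] at B
  rw [Real.cosh_eq]
  rw [abs_le] at A B ⊢
  constructor <;> nlinarith [A.1, A.2, B.1, B.2]

lemma key_ineq {x : ℝ} (h0 : 0 ≤ x) (h1 : x ≤ 1) :
    |Real.sinh x ^ 2 / Real.cosh x ^ 3 - x ^ 2| ≤ 10 * x ^ 4 := by
  have hc : 1 ≤ Real.cosh x := Real.one_le_cosh x
  have hc0 : (0:ℝ) < Real.cosh x := Real.cosh_pos x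
  have hs0 : 0 ≤ Real.sinh x := by positivity
  have hS := abs_le.mp (sinh_taylor h0 h1)
  have hC := abs_le.mp (cosh_taylor h0 h1)
  have hc3 : (1:ℝ) ≤ Real.cosh x ^ 3 := one_le_pow₀ hc
  have hx64 : x^6 ≤ x^4 := pow_le_pow_of_le_one h0 h1 (by norm_num)
  have hcu : Real.cosh x ≤ 1 + x^2 := by nlinarith [hC.2]
  have hcub : Real.cosh x ^ 3 ≤ (1 + x^2)^3 := pow_le_pow_left₀ hc0.le hcu 3
  have hc3u : Real.cosh x ^ 3 ≤ 1 + 7*x^2 := by nlinarith [hcub, hx64, sq_nonneg x]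
  have hsu : Real.sinh x ^ 2 ≤ (x + 2/9*x^3)^2 := pow_le_pow_left₀ hs0 (by linarith [hS.2]) 2
  have hsq : Real.sinh x ^ 2 ≤ x^2 + x^4 := by nlinarith [hsu, hx64]
  have hsl : (x - 2/9*x^3)^2 ≤ Real.sinh x ^ 2 :=
    pow_le_pow_left₀ (by nlinarith) (by linarith [hS.1]) 2
  have hsql : x^2 - (4/9)*x^4 ≤ Real.sinh x ^ 2 := by nlinarith [hsl]
  have hxc3u : x^2 * Real.cosh x ^ 3 ≤ x^2 * (1 + 7*x^2) :=
    mul_le_mul_of_nonneg_left hc3u (sq_nonneg x)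
  have hxc3l : x^2 ≤ x^2 * Real.cosh x ^ 3 := by nlinarith [sq_nonneg x, hc3]
  have heq : Real.sinh x ^ 2 / Real.cosh x ^ 3 - x ^ 2
      = (Real.sinh x ^ 2 - x^2 * Real.cosh x ^ 3) / Real.cosh x ^ 3 := by
    field_simp
  rw [heq, abs_div, abs_of_pos (show (0:ℝ) < Real.cosh x ^ 3 by positivity)]
  have hxc3u' : x^2 * Real.cosh x ^ 3 ≤ x^2 + 7*x^4 := hxc3u.trans (le_of_eq (by ring))
  have h2 : |Real.sinh x ^ 2 - x^2 * Real.cosh x ^ 3| ≤ 10 * x ^ 4 := by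
    rw [abs_le]
    have hx4 : 0 ≤ x^4 := by positivity
    constructor <;> linarith only [hsq, hsql, hxc3l, hxc3u', hx4]
  calc |Real.sinh x ^ 2 - x^2 * Real.cosh x ^ 3| / Real.cosh x ^ 3
      ≤ |Real.sinh x ^ 2 - x^2 * Real.cosh x ^ 3| := div_le_self (abs_nonneg _) hc3
    _ ≤ 10 * x ^ 4 := h2

lemma abs_tanh_lt_one (x : ℝ) : |Real.tanh x| < 1 := by
  rw [Real.tanh_eq_sinh_div_cosh, abs_div, abs_of_pos (Real.cosh_pos x),
    div_lt_one (Real.cosh_pos x), Real.abs_sinh]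
  exact Real.sinh_lt_cosh |x| |>.trans_eq (Real.cosh_abs x)

lemma sqrt_one_sub_tanh_sq (x : ℝ) : √(1 - Real.tanh x ^ 2) = 1 / Real.cosh x := by
  have hc : Real.cosh x ≠ 0 := (Real.cosh_pos x).ne'
  have h : 1 - Real.tanh x ^ 2 = (1 / Real.cosh x) ^ 2 := by
    rw [Real.tanh_eq_sinh_div_cosh]
    field_simp
    exact Real.cosh_sq_sub_sinh_sq x
  rw [h, Real.sqrt_sq (by positivity)]

lemma c₀_eq (L : ℝ) : c₀ L = Real.arccos (Real.tanh (L/2))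
    + Real.sinh (L/2) / Real.cosh (L/2) ^ 2 := by
  have ht := abs_lt.mp (_root_.abs_tanh_lt_one (L/2))
  have hc : Real.cosh (L/2) ≠ 0 := (Real.cosh_pos _).ne'
  rw [c₀, hh, Real.sin_two_mul, Real.sin_arccos, Real.cos_arccos ht.1.le ht.2.le,
    sqrt_one_sub_tanh_sq, Real.tanh_eq_sinh_div_cosh]
  field_simp

lemma hasDerivAt_F (x : ℝ) :
    HasDerivAt (fun y : ℝ => Real.arccos (Real.tanh y) + Real.sinh y / Real.cosh y ^ 2)
      (-(2 * Real.sinh x ^ 2 / Real.cosh x ^ 3)) x := by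
  have ht := abs_lt.mp (_root_.abs_tanh_lt_one x)
  have hc : Real.cosh x ≠ 0 := (Real.cosh_pos x).ne'
  have htanh : HasDerivAt Real.tanh (1 / Real.cosh x ^ 2) x := by
    have h1 : HasDerivAt (fun y => Real.sinh y / Real.cosh y)
        ((Real.cosh x * Real.cosh x - Real.sinh x * Real.sinh x) / Real.cosh x ^ 2) x :=
      (Real.hasDerivAt_sinh x).div (Real.hasDerivAt_cosh x) hc
    have : Real.tanh = fun y => Real.sinh y / Real.cosh y :=
      funext fun y => Real.tanh_eq_sinh_div_cosh y
    rw [this]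
    convert h1 using 1
    have := Real.cosh_sq_sub_sinh_sq x
    field_simp
    nlinarith [Real.cosh_sq_sub_sinh_sq x]
  have harccos : HasDerivAt (fun y => Real.arccos (Real.tanh y))
      (-(1 / √(1 - Real.tanh x ^ 2)) * (1 / Real.cosh x ^ 2)) x :=
    (Real.hasDerivAt_arccos ht.1.ne' ht.2.ne).comp x htanh
  have hq : HasDerivAt (fun y => Real.sinh y / Real.cosh y ^ 2)
      ((Real.cosh x * Real.cosh x ^ 2 - Real.sinh x * (2 * Real.cosh x ^ 1 * Real.sinh x))
        / (Real.cosh x ^ 2) ^ 2) x :=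
    (Real.hasDerivAt_sinh x).div ((Real.hasDerivAt_cosh x).pow 2) (by positivity)
  refine (harccos.add hq).congr_deriv ?_
  symm
  rw [sqrt_one_sub_tanh_sq]
  have h1 := Real.cosh_sq_sub_sinh_sq x
  field_simp
  ring_nf

lemma hasDerivAt_c₀ (L : ℝ) :
    HasDerivAt c₀ (-(Real.sinh (L/2) ^ 2 / Real.cosh (L/2) ^ 3)) L := by
  have h2 : HasDerivAt (fun y : ℝ => y / 2) (1/2) L := (hasDerivAt_id L).div_const 2
  have hF := (hasDerivAt_F (L/2)).comp L h2
  have hfun : c₀ = (fun y : ℝ => Real.arccos (Real.tanh y) + Real.sinh y / Real.cosh y ^ 2)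
      ∘ (fun y : ℝ => y / 2) := funext fun L => c₀_eq L
  rw [hfun]
  refine hF.congr_deriv ?_
  ring

lemma integrand_continuous :
    Continuous (fun s : ℝ => -(Real.sinh (s/2) ^ 2 / Real.cosh (s/2) ^ 3)) := by
  apply Continuous.neg
  apply Continuous.div
  · fun_prop
  · fun_prop
  · intro s
    positivity

lemma c₀_zero : c₀ 0 = π / 2 := by
  have : (2:ℝ) * (π/2) = π := by ring
  rw [c₀, hh]
  norm_num [Real.arccos_zero, this, Real.sin_pi]

theorem c₀_ftc (L : ℝ) :
    c₀ L - π/2 = ∫ s in (0:ℝ)..L, -(Real.sinh (s/2) ^ 2 / Real.cosh (s/2) ^ 3) := by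
  have h := intervalIntegral.integral_eq_sub_of_hasDerivAt
    (f := c₀) (a := 0) (b := L)
    (fun s _ => hasDerivAt_c₀ s)
    (integrand_continuous.intervalIntegrable 0 L)
  rw [h, c₀_zero]

/-- `c₀(L) = π/2 - L³/12 + O(L⁵)` as `L → 0⁺`. -/
theorem c₀_asymptotic :
    ∃ δ > (0 : ℝ), ∃ M > (0 : ℝ), ∀ L : ℝ, 0 < L → L < δ →
      |c₀ L - π / 2 + L ^ 3 / 12| ≤ M * L ^ 5 := by
  refine ⟨1, one_pos, 1, one_pos, fun L hL0 hL1 => ?_⟩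
  have hint1 : IntervalIntegrable
      (fun s : ℝ => -(Real.sinh (s/2) ^ 2 / Real.cosh (s/2) ^ 3)) MeasureTheory.volume 0 L :=
    integrand_continuous.intervalIntegrable 0 L
  have hint2 : IntervalIntegrable (fun s : ℝ => s^2/4) MeasureTheory.volume 0 L := by
    apply Continuous.intervalIntegrable; fun_prop
  have hpow : (∫ s in (0:ℝ)..L, s^2/4) = L^3/12 := by
    rw [intervalIntegral.integral_div, integral_pow]
    norm_num
    ring
  have hsum : c₀ L - π / 2 + L ^ 3 / 12
      = ∫ s in (0:ℝ)..L, (-(Real.sinh (s/2) ^ 2 / Real.cosh (s/2) ^ 3) + s^2/4) := by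
    rw [intervalIntegral.integral_add hint1 hint2, ← c₀_ftc, hpow]
  rw [hsum]
  have hbound : ∀ s ∈ Set.uIoc (0:ℝ) L,
      ‖-(Real.sinh (s/2) ^ 2 / Real.cosh (s/2) ^ 3) + s^2/4‖ ≤ L^4 := by
    intro s hs
    rw [Set.uIoc_of_le hL0.le] at hs
    have hs0 : 0 ≤ s/2 := by linarith [hs.1.le]
    have hs1 : s/2 ≤ 1 := by linarith [hs.2, hL1]
    have hk := key_ineq hs0 hs1
    have heq : -(Real.sinh (s/2) ^ 2 / Real.cosh (s/2) ^ 3) + s^2/4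
        = -(Real.sinh (s/2) ^ 2 / Real.cosh (s/2) ^ 3 - (s/2)^2) := by ring
    rw [Real.norm_eq_abs, heq, abs_neg]
    have h10 : 10 * (s/2)^4 ≤ s^4 := by nlinarith [pow_nonneg hs.1.le 4]
    have hsL : s^4 ≤ L^4 := pow_le_pow_left₀ hs.1.le hs.2 4
    linarith [hk]
  have := intervalIntegral.norm_integral_le_of_norm_le_const hbound
  rw [Real.norm_eq_abs] at this
  calc |∫ s in (0:ℝ)..L, (-(Real.sinh (s/2) ^ 2 / Real.cosh (s/2) ^ 3) + s^2/4)|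
      ≤ L^4 * |L - 0| := this
    _ = L^5 := by rw [sub_zero, abs_of_pos hL0]; ring
    _ = 1 * L^5 := (one_mul _).symm
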